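/- Let X be a linear subspace of the space of all complex sequences that is invariant under coordinatewise multiplication by elements of c₀, endowed with a norm making it a contractive c₀-module with respect to this coordinatewise action, and suppose X is essential. Then X is homogeneous; in particular, for x, y ∈ X with |x(n)| = |y(n)| for all n ∈ ℕ one has ‖x‖ = ‖y‖. -/

import Mathlib

open Filter MeasureTheory

noncomputable section

/-- The algebra `c₀` of complex sequences converging to zero, with pointwise
operations and the supremum norm. -/
abbrev czero : Type := ZeroAtInftyContinuousMap ℕ ℂ

/-- The `n`-th ort: the indicator sequence of `{n}`. -/
def ort (n : ℕ) : czero where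
  toFun := fun m => if m = n then 1 else 0
  continuous_toFun := continuous_of_discreteTopology
  zero_at_infty' := by
    rw [cocompact_eq_atTop]
    have h : (fun m : ℕ => if m = n then (1 : ℂ) else 0) =ᶠ[atTop] fun _ => (0 : ℂ) := by
      filter_upwards [eventually_gt_atTop n] with m hm
      simp [Nat.ne_of_gt hm]
    exact (tendsto_congr' h).mpr tendsto_const_nhds

/-- `P N = p⁰ + ⋯ + p^{N-1}`. -/
def PN (N : ℕ) : czero := ∑ n ∈ Finset.range N, ort n

/-- A (contractive) normed `c₀`-module structure on a complex normed space `X`. -/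
structure C0Mod (X : Type) [NormedAddCommGroup X] [NormedSpace ℂ X] where
  smul : czero → X → X
  add_smul : ∀ a b x, smul (a + b) x = smul a x + smul b x
  smul_add : ∀ a x y, smul a (x + y) = smul a x + smul a y
  mul_smul : ∀ a b x, smul (a * b) x = smul a (smul b x)
  csmul_left : ∀ (c : ℂ) a x, smul (c • a) x = c • smul a x
  csmul_right : ∀ (c : ℂ) a x, smul a (c • x) = c • smul a x
  norm_smul_le : ∀ a x, ‖smul a x‖ ≤ ‖a‖ * ‖x‖

namespace C0Mod

variable {X : Type} [NormedAddCommGroup X] [NormedSpace ℂ X] (M : C0Mod X)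

/-- The action of `a ∈ c₀` as a continuous linear map. -/
def lsmul (a : czero) : X →L[ℂ] X :=
  LinearMap.mkContinuous
    { toFun := M.smul a
      map_add' := M.smul_add a
      map_smul' := fun c x => M.csmul_right c a x }
    ‖a‖ (fun x => M.norm_smul_le a x)

@[simp] lemma lsmul_apply (a : czero) (x : X) : M.lsmul a x = M.smul a x := rfl

/-- The essential part `X_es` of `X`: the closure of the linear span of all
products `a • x`. -/
def essSet : Set X :=
  closure (Submodule.span ℂ {y : X | ∃ (a : czero) (x : X), y = M.smul a x} : Set X)

/-- A module is essential if it coincides with its essential part. -/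
def Essential : Prop := M.essSet = Set.univ

/-- The `n`-th coordinate submodule `Xₙ = {pⁿ • x : x ∈ X}`. -/
def coordSub (n : ℕ) : Submodule ℂ X := LinearMap.range ((M.lsmul (ort n)) : X →ₗ[ℂ] X)

lemma mem_coordSub (n : ℕ) (x : X) : M.smul (ort n) x ∈ M.coordSub n := ⟨x, rfl⟩

/-- A module is homogeneous if the norm of an element is determined by the norms
of its coordinates. -/
def Homogeneous : Prop :=
  ∀ x y : X, (∀ n : ℕ, ‖M.smul (ort n) x‖ = ‖M.smul (ort n) y‖) → ‖x‖ = ‖y‖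

/-- The annihilator of `c₀` in `X`. -/
def ann : Submodule ℂ X where
  carrier := {x : X | ∀ a : czero, M.smul a x = 0}
  add_mem' := by
    intro x y hx hy
    intro a
    rw [M.smul_add, hx a, hy a, add_zero]
  zero_mem' := by
    intro a
    have h := M.smul_add a 0 0
    simp only [add_zero] at h
    have := congrArg (fun z => z - M.smul a 0) h
    simpa using this.symm
  smul_mem' := by
    intro c x hx a
    rw [M.csmul_right, hx a, smul_zero]

end C0Mod

lemma ort_apply (n m : ℕ) : ort n m = if m = n then 1 else 0 := rfl

lemma czero_norm_le (f : czero) {C : ℝ} (hC : 0 ≤ C) (h : ∀ k, ‖f k‖ ≤ C) :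
    ‖f‖ ≤ C := by
  rw [← ZeroAtInftyContinuousMap.norm_toBCF_eq_norm]
  exact (BoundedContinuousFunction.norm_le hC).mpr fun k => h k

lemma PN_apply (N k : ℕ) : PN N k = if k < N then 1 else 0 := by
  have : (PN N : ℕ → ℂ) k = ∑ n ∈ Finset.range N, ort n k := by
    have h := map_sum (⟨⟨((⇑·) : czero → ℕ → ℂ), ZeroAtInftyContinuousMap.coe_zero⟩,
      ZeroAtInftyContinuousMap.coe_add⟩ : czero →+ (ℕ → ℂ)) ort (Finset.range N)
    have h2 := congrFun h k
    rw [Finset.sum_apply] at h2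
    exact h2
  rw [this]
  simp only [ort_apply]
  rw [Finset.sum_ite_eq (Finset.range N) k (fun _ => (1:ℂ))]
  simp [Finset.mem_range]

lemma norm_PN_le (N : ℕ) : ‖PN N‖ ≤ 1 := by
  apply czero_norm_le _ zero_le_one
  intro k
  rw [PN_apply]
  split <;> simp

lemma tendsto_PN_mul (a : czero) :
    Tendsto (fun N => PN N * a) atTop (nhds a) := by
  rw [Metric.tendsto_atTop]
  intro ε hε
  have ha : Tendsto (⇑a) atTop (nhds (0 : ℂ)) := by
    have := a.zero_at_infty'
    rwa [cocompact_eq_atTop] at this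
  rw [Metric.tendsto_atTop] at ha
  obtain ⟨N₀, hN₀⟩ := ha (ε / 2) (by linarith)
  refine ⟨N₀, fun N hN => ?_⟩
  rw [dist_eq_norm]
  have hle : ‖PN N * a - a‖ ≤ ε / 2 := by
    apply czero_norm_le _ (by linarith)
    intro k
    have : (PN N * a - a) k = PN N k * a k - a k := by
      simp [ZeroAtInftyContinuousMap.coe_sub, ZeroAtInftyContinuousMap.coe_mul]
    rw [this, PN_apply]
    by_cases hk : k < N
    · simp [hk]; linarith
    · simp only [hk, if_neg, ite_false, zero_mul, zero_sub, map_neg]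
      have := hN₀ k (le_trans hN (Nat.not_lt.mp hk))
      rw [dist_eq_norm, sub_zero] at this
      simpa using this.le
  linarith

lemma C0Mod.tendsto_PN_smul {X : Type} [NormedAddCommGroup X] [NormedSpace ℂ X]
    (M : C0Mod X) (hess : M.Essential) (x : X) :
    Tendsto (fun N => M.smul (PN N) x) atTop (nhds x) := by
  -- first on the span
  have hsmul_zero : ∀ a : czero, M.smul a 0 = 0 := fun a => (M.lsmul a).map_zero
  have hspan : ∀ z ∈ Submodule.span ℂ {y : X | ∃ (a : czero) (x : X), y = M.smul a x},
      Tendsto (fun N => M.smul (PN N) z) atTop (nhds z) := by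
    intro z hz
    induction hz using Submodule.span_induction with
    | mem z hz =>
      obtain ⟨a, w, rfl⟩ := hz
      have key : ∀ N, M.smul (PN N) (M.smul a w) = M.smul (PN N * a) w := by
        intro N; rw [M.mul_smul]
      simp only [key]
      have hc : Continuous (fun b : czero => M.smul b w) := by
        rw [Metric.continuous_iff]
        intro b ε hε
        rcases eq_or_lt_of_le (norm_nonneg w) with hw | hw
        · exact ⟨1, one_pos, fun c _ => by
            have h1 : c - b + b = c := by abel
            have h2 : M.smul c w - M.smul b w = M.smul (c - b) w := by
              have h3 := M.add_smul (c - b) b w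
              rw [h1] at h3
              rw [h3]; abel
            rw [dist_eq_norm, h2]
            calc ‖M.smul (c - b) w‖ ≤ ‖c - b‖ * ‖w‖ := M.norm_smul_le _ _
              _ = 0 := by rw [← hw, mul_zero]
              _ < ε := hε⟩
        · refine ⟨ε / ‖w‖, div_pos hε hw, fun c hcb => ?_⟩
          have h1 : c - b + b = c := by abel
          have h2 : M.smul c w - M.smul b w = M.smul (c - b) w := by
            have := M.add_smul (c - b) b w
            rw [h1] at this
            rw [this]; abel
          rw [dist_eq_norm, h2]
          calc ‖M.smul (c - b) w‖ ≤ ‖c - b‖ * ‖w‖ := M.norm_smul_le _ _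
            _ < (ε / ‖w‖) * ‖w‖ := by
                apply mul_lt_mul_of_pos_right _ hw
                rwa [dist_eq_norm] at hcb
            _ = ε := div_mul_cancel₀ ε (ne_of_gt hw)
      exact (hc.tendsto a).comp (tendsto_PN_mul a)
    | zero => simp only [hsmul_zero]; exact tendsto_const_nhds
    | add u v hu hv ihu ihv =>
      simp only [M.smul_add]
      exact ihu.add ihv
    | smul c u hu ihu =>
      simp only [M.csmul_right]
      exact ihu.const_smul c
  -- now on the closure
  have hx : x ∈ M.essSet := by rw [hess]; trivial
  rw [Metric.tendsto_atTop]
  intro ε hε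
  rw [C0Mod.essSet, Metric.mem_closure_iff] at hx
  obtain ⟨z, hzmem, hzx⟩ := hx (ε / 3) (by linarith)
  obtain ⟨N₀, hN₀⟩ := Metric.tendsto_atTop.mp (hspan z hzmem) (ε / 3) (by linarith)
  refine ⟨N₀, fun N hN => ?_⟩
  have hdec : M.smul (PN N) x - x = M.smul (PN N) (x - z) + (M.smul (PN N) z - z) + (z - x) := by
    have h1 : (x - z) + z = x := by abel
    have := M.add_smul  -- unused
    have h2 := M.smul_add (PN N) (x - z) z
    rw [h1] at h2
    rw [h2]; abel
  rw [dist_eq_norm, hdec]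
  have e1 : ‖M.smul (PN N) (x - z)‖ ≤ ε / 3 := by
    calc ‖M.smul (PN N) (x - z)‖ ≤ ‖PN N‖ * ‖x - z‖ := M.norm_smul_le _ _
      _ ≤ 1 * ‖x - z‖ := mul_le_mul_of_nonneg_right (norm_PN_le N) (norm_nonneg _)
      _ = ‖x - z‖ := one_mul _
      _ ≤ ε / 3 := by rw [← dist_eq_norm]; exact hzx.le
  have e2 : ‖M.smul (PN N) z - z‖ < ε / 3 := by
    have := hN₀ N hN
    rwa [dist_eq_norm] at this
  have e3 : ‖z - x‖ ≤ ε / 3 := by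
    rw [← dist_eq_norm, dist_comm]
    exact hzx.le
  calc ‖M.smul (PN N) (x - z) + (M.smul (PN N) z - z) + (z - x)‖
      ≤ ‖M.smul (PN N) (x - z) + (M.smul (PN N) z - z)‖ + ‖z - x‖ := norm_add_le _ _
    _ ≤ ‖M.smul (PN N) (x - z)‖ + ‖M.smul (PN N) z - z‖ + ‖z - x‖ := by
        have := norm_add_le (M.smul (PN N) (x - z)) (M.smul (PN N) z - z)
        linarith
    _ < ε := by linarith


def finseq (c : ℕ → ℂ) (N : ℕ) : czero where
  toFun := fun k => if k < N then c k else 0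
  continuous_toFun := continuous_of_discreteTopology
  zero_at_infty' := by
    rw [cocompact_eq_atTop]
    have h : (fun k : ℕ => if k < N then c k else 0) =ᶠ[atTop] fun _ => (0:ℂ) := by
      filter_upwards [eventually_ge_atTop N] with k hk
      simp [Nat.not_lt.mpr hk]
    exact (tendsto_congr' h).mpr tendsto_const_nhds

lemma finseq_apply (c : ℕ → ℂ) (N k : ℕ) : finseq c N k = if k < N then c k else 0 := rfl

lemma norm_finseq_le (c : ℕ → ℂ) (N : ℕ) (h : ∀ k, ‖c k‖ ≤ 1) :
    ‖finseq c N‖ ≤ 1 := by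
  apply czero_norm_le _ zero_le_one
  intro k
  rw [finseq_apply]
  split
  · exact h k
  · simp

/-- Let `X` be a linear subspace of the space of complex
sequences (realized by an injective linear map `e : X →ₗ[ℂ] (ℕ → ℂ)`),
invariant under coordinatewise multiplication by elements of `c₀`, endowed with
a norm making it a contractive `c₀`-module for the coordinatewise action, and
suppose `X` is essential.  Then `X` is homogeneous; in particular, if
`|x(n)| = |y(n)|` for all `n` then `‖x‖ = ‖y‖`. -/
theorem essential_sequence_module_homogeneous
    {X : Type} [NormedAddCommGroup X] [NormedSpace ℂ X] (M : C0Mod X)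
    (e : X →ₗ[ℂ] (ℕ → ℂ)) (he : Function.Injective e)
    (hcoord : ∀ (a : czero) (x : X) (k : ℕ), e (M.smul a x) k = a k * e x k)
    (hess : M.Essential) :
    M.Homogeneous ∧
      ∀ x y : X, (∀ k : ℕ, ‖e x k‖ = ‖e y k‖) → ‖x‖ = ‖y‖ := by
  have hort : ∀ (z : X) (k m : ℕ), e (M.smul (ort k) z) m = (if m = k then 1 else 0) * e z m := by
    intro z k m; rw [hcoord]; rfl
  have hzero : ∀ (z : X) (k : ℕ), e z k = 0 → M.smul (ort k) z = 0 := by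
    intro z k hz
    apply he
    rw [map_zero]
    funext m
    rw [hort]
    by_cases hm : m = k
    · subst hm; simp [hz]
    · simp [hm]
  have hval : ∀ (z : X) (k : ℕ), e (M.smul (ort k) z) k = e z k := by
    intro z k; rw [hort]; simp
  have hrel : ∀ (x y : X) (k : ℕ), e x k ≠ 0 →
      M.smul (ort k) y = (e y k / e x k) • M.smul (ort k) x := by
    intro x y k hx
    apply he
    rw [_root_.map_smul]
    funext m
    rw [hort y k m]
    simp only [Pi.smul_apply, smul_eq_mul]
    rw [hort x k m]
    by_cases hm : m = k
    · subst hm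
      simp [div_mul_cancel₀ _ hx]
    · simp [hm]
  have main : ∀ x y : X, (∀ n, ‖M.smul (ort n) x‖ = ‖M.smul (ort n) y‖) → ‖y‖ ≤ ‖x‖ := by
    intro x y h
    set c : ℕ → ℂ := fun k => if e x k = 0 then 0 else e y k / e x k with hc
    have hkey : ∀ k, ‖c k‖ ≤ 1 ∧ c k * e x k = e y k := by
      intro k
      by_cases hx0 : e x k = 0
      · have hx' : M.smul (ort k) x = 0 := hzero x k hx0
        have hy' : M.smul (ort k) y = 0 := by
          have hk := h k
          rw [hx', norm_zero] at hk
          exact norm_eq_zero.mp hk.symm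
        have hy0 : e y k = 0 := by
          have hv := hval y k
          rw [hy', map_zero] at hv
          exact hv.symm
        constructor
        · simp [hc, hx0]
        · simp [hc, hx0, hy0]
      · have hnx : M.smul (ort k) x ≠ 0 := by
          intro h0
          apply hx0
          have hv := hval x k
          rw [h0, map_zero] at hv
          exact hv.symm
        have habs1 : ‖e y k / e x k‖ = 1 := by
          have hn := h k
          rw [hrel x y k hx0, norm_smul] at hn
          have hx' : ‖M.smul (ort k) x‖ ≠ 0 := norm_ne_zero_iff.mpr hnx
          have := mul_right_cancel₀ hx' (by rw [one_mul]; exact hn :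
            (1 : ℝ) * ‖M.smul (ort k) x‖ = ‖(e y k / e x k : ℂ)‖ * ‖M.smul (ort k) x‖)
          exact this.symm
        constructor
        · simp only [hc, if_neg hx0]
          rw [habs1]
        · simp only [hc, if_neg hx0]
          exact div_mul_cancel₀ _ hx0
    have hfin : ∀ N, M.smul (PN N) y = M.smul (finseq c N) x := by
      intro N
      apply he
      funext k
      rw [hcoord, hcoord, PN_apply, finseq_apply]
      by_cases hk : k < N
      · simp only [if_pos hk, one_mul]
        exact ((hkey k).2).symm
      · simp [hk]
    have hbound : ∀ N, ‖M.smul (PN N) y‖ ≤ ‖x‖ := by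
      intro N
      rw [hfin N]
      calc ‖M.smul (finseq c N) x‖ ≤ ‖finseq c N‖ * ‖x‖ := M.norm_smul_le _ _
        _ ≤ 1 * ‖x‖ := mul_le_mul_of_nonneg_right
            (norm_finseq_le c N fun k => (hkey k).1) (norm_nonneg _)
        _ = ‖x‖ := one_mul _
    exact le_of_tendsto ((continuous_norm.tendsto y).comp (M.tendsto_PN_smul hess y))
      (Eventually.of_forall hbound)
  have homog : M.Homogeneous := fun x y h =>
    le_antisymm (main y x fun n => (h n).symm) (main x y h)
  refine ⟨homog, fun x y habs => homog x y fun n => ?_⟩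
  by_cases hx0 : e x n = 0
  · have hy0 : e y n = 0 := by
      have := habs n
      rw [hx0] at this
      simpa using this.symm
    rw [hzero x n hx0, hzero y n hy0]
  · rw [hrel x y n hx0, norm_smul]
    have h1 : ‖(e y n / e x n : ℂ)‖ = 1 := by
      rw [norm_div, ← habs n, div_self (norm_ne_zero_iff.mpr hx0)]
    rw [h1, one_mul]
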